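/- arXiv:1004.1833 — 2 statements merged into one kernel-verified Lean document; each statement's English description precedes it below -/
import Mathlib

section
/- Let a ≥ 0, δ > 0, and suppose 3a² - 4 < 6/δ. Define Ψ on [0,∞) by the solution of Ψ' = 3a²Ψ/(6+4t) - 4π with Ψ(0) = 4πδ. Then there exists T > 0 with Ψ(T) = 0. -/
open Real Filter

private lemma base_deriv (t : ℝ) : HasDerivAt (fun t : ℝ => 6 + 4 * t) 4 t := by
  simpa using ((hasDerivAt_id t).const_mul 4).const_add (6:ℝ)

private lemma pow_deriv (p t : ℝ) (ht : (0:ℝ) < 6 + 4 * t) :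
    HasDerivAt (fun t : ℝ => (6 + 4 * t) ^ p) (4 * p * (6 + 4 * t) ^ (p - 1)) t :=
  (base_deriv t).rpow_const (Or.inl ht.ne')

private lemma key (q : ℝ) (Ψ F : ℝ → ℝ)
    (hΨpos : 0 < Ψ 0)
    (hF0 : F 0 = (6:ℝ) ^ (-q) * Ψ 0)
    (hΨ : ∀ t ≥ (0:ℝ), HasDerivAt Ψ (4 * q * Ψ t / (6 + 4 * t) - 4 * π) t)
    (hF : ∀ t ≥ (0:ℝ), HasDerivAt F (-(4 * π) * (6 + 4 * t) ^ (-q)) t)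
    (hT : ∃ T ≥ (0:ℝ), F T < 0) :
    ∃ T > (0:ℝ), Ψ T = 0 := by
  obtain ⟨T, hT0, hTF⟩ := hT
  set g : ℝ → ℝ := fun t => (6 + 4 * t) ^ (-q) * Ψ t - F t with hgdef
  have hpos : ∀ t : ℝ, 0 ≤ t → (0:ℝ) < 6 + 4 * t := fun t ht => by linarith
  have hgderiv : ∀ t : ℝ, 0 ≤ t → HasDerivAt g 0 t := by
    intro t ht
    have h64 := hpos t ht
    have h1 : HasDerivAt (fun t : ℝ => (6 + 4 * t) ^ (-q) * Ψ t)
        ((4 * (-q) * (6 + 4 * t) ^ (-q - 1)) * Ψ t +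
          (6 + 4 * t) ^ (-q) * (4 * q * Ψ t / (6 + 4 * t) - 4 * π)) t :=
      (pow_deriv (-q) t h64).mul (hΨ t ht)
    have h2 := h1.sub (hF t ht)
    convert h2 using 1
    · rfl
    · rfl
    · rfl
    have e1 : (6 + 4 * t) ^ (-q - 1) = (6 + 4 * t) ^ (-q) * (6 + 4 * t)⁻¹ := by
      rw [show -q - 1 = -q + (-1) by ring, rpow_add h64, rpow_neg_one]
    rw [e1]
    field_simp
    ring
  have hcont : ContinuousOn g (Set.Icc 0 T) := fun x hx =>
    ((hgderiv x hx.1).continuousAt).continuousWithinAt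
  have hconst := constant_of_has_deriv_right_zero hcont
    (fun x hx => ((hgderiv x hx.1).hasDerivWithinAt))
  have hg0 : g 0 = 0 := by
    simp only [hgdef, hF0]
    norm_num
  have hgT : g T = 0 := by
    rw [hconst T ⟨hT0, le_rfl⟩, hg0]
  have hΨT : Ψ T < 0 := by
    have hb : (0:ℝ) < (6 + 4 * T) ^ (-q) := rpow_pos_of_pos (hpos T hT0) _
    by_contra h
    push_neg at h
    have : (0:ℝ) ≤ (6 + 4 * T) ^ (-q) * Ψ T := mul_nonneg hb.le h
    have hgT' : (6 + 4 * T) ^ (-q) * Ψ T - F T = 0 := hgT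
    linarith
  have hcontΨ : ContinuousOn Ψ (Set.Icc 0 T) := fun x hx =>
    ((hΨ x hx.1).continuousAt).continuousWithinAt
  have hivt := intermediate_value_Icc' hT0 hcontΨ
  obtain ⟨x, hx, hΨx⟩ := hivt ⟨hΨT.le, hΨpos.le⟩
  refine ⟨x, ?_, hΨx⟩
  rcases hx.1.lt_or_eq with h | h
  · exact h
  · exact absurd (h ▸ hΨx) hΨpos.ne'

private lemma base_tendsto : Tendsto (fun t : ℝ => 6 + 4 * t) atTop atTop :=
  tendsto_atTop_add_const_left _ 6 (tendsto_id.const_mul_atTop (by norm_num : (0:ℝ) < 4))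

/-- Proposition 2.4 at the ODE level: if `3a² - 4 < 6/δ` then the barrier `Ψ`
solving `Ψ' = 3a²Ψ/(6+4t) - 4π`, `Ψ(0) = 4πδ`, vanishes at some `T > 0`. -/
theorem stmt7 (a δ : ℝ) (ha : 0 ≤ a) (hδ : 0 < δ) (hcrit : 3 * a^2 - 4 < 6 / δ)
    (Ψ : ℝ → ℝ) (hΨ0 : Ψ 0 = 4 * π * δ)
    (hΨ : ∀ t ≥ (0:ℝ), HasDerivAt Ψ (3 * a^2 * Ψ t / (6 + 4 * t) - 4 * π) t) :
    ∃ T > (0:ℝ), Ψ T = 0 := by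
  set q : ℝ := 3 * a ^ 2 / 4 with hq
  have hΨpos : 0 < Ψ 0 := by
    rw [hΨ0]; positivity
  have hΨ' : ∀ t ≥ (0:ℝ), HasDerivAt Ψ (4 * q * Ψ t / (6 + 4 * t) - 4 * π) t := by
    intro t ht
    have := hΨ t ht
    convert this using 2
    rw [hq]; ring
  have hpos : ∀ t : ℝ, 0 ≤ t → (0:ℝ) < 6 + 4 * t := fun t ht => by linarith
  rcases lt_trichotomy q 1 with hq1 | hq1 | hq1
  · -- q < 1
    set F : ℝ → ℝ := fun t =>
      (6:ℝ) ^ (-q) * Ψ 0 + (π / (1 - q)) * ((6:ℝ) ^ (1 - q) - (6 + 4 * t) ^ (1 - q)) with hFdef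
    have h1q : (0:ℝ) < 1 - q := by linarith
    apply key q Ψ F hΨpos ?_ hΨ' ?_ ?_
    · simp only [hFdef]; norm_num
    · intro t ht
      have h64 := hpos t ht
      have hd := (((pow_deriv (1 - q) t h64).const_sub ((6:ℝ) ^ (1 - q))).const_mul
        (π / (1 - q))).const_add ((6:ℝ) ^ (-q) * Ψ 0)
      convert hd using 1
      · rfl
      · rfl
      rw [show 1 - q - 1 = -q by ring]
      field_simp
    · have h1 : Tendsto (fun t : ℝ => (6 + 4 * t) ^ (1 - q)) atTop atTop :=
        (tendsto_rpow_atTop h1q).comp base_tendsto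
      have h2 : Tendsto F atTop atBot := by
        apply tendsto_atBot_add_const_left _ _
        apply Tendsto.const_mul_atBot (div_pos pi_pos h1q)
        simpa [sub_eq_add_neg] using
          tendsto_atBot_add_const_left atTop ((6:ℝ) ^ (1 - q)) (tendsto_neg_atTop_atBot.comp h1)
      obtain ⟨T, hT1, hT2⟩ := ((h2.eventually_lt_atBot 0).and (eventually_ge_atTop 0)).exists
      exact ⟨T, hT2, hT1⟩
  · -- q = 1
    set F : ℝ → ℝ := fun t =>
      (6:ℝ) ^ (-q) * Ψ 0 + π * (Real.log 6 - Real.log (6 + 4 * t)) with hFdef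
    apply key q Ψ F hΨpos ?_ hΨ' ?_ ?_
    · simp only [hFdef]; norm_num
    · intro t ht
      have h64 := hpos t ht
      have hd := ((((base_deriv t).log h64.ne').const_sub (Real.log 6)).const_mul
        π).const_add ((6:ℝ) ^ (-q) * Ψ 0)
      convert hd using 1
      · rfl
      · rfl
      rw [hq1, rpow_neg_one]
      field_simp [h64.ne']
    · have h1 : Tendsto (fun t : ℝ => Real.log (6 + 4 * t)) atTop atTop :=
        Real.tendsto_log_atTop.comp base_tendsto
      have h2 : Tendsto F atTop atBot := by
        apply tendsto_atBot_add_const_left _ _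
        apply Tendsto.const_mul_atBot pi_pos
        simpa [sub_eq_add_neg] using
          tendsto_atBot_add_const_left atTop (Real.log 6) (tendsto_neg_atTop_atBot.comp h1)
      obtain ⟨T, hT1, hT2⟩ := ((h2.eventually_lt_atBot 0).and (eventually_ge_atTop 0)).exists
      exact ⟨T, hT2, hT1⟩
  · -- q > 1
    set F : ℝ → ℝ := fun t =>
      (6:ℝ) ^ (-q) * Ψ 0 + (π / (q - 1)) * ((6 + 4 * t) ^ (1 - q) - (6:ℝ) ^ (1 - q)) with hFdef
    have hq1' : (0:ℝ) < q - 1 := by linarith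
    apply key q Ψ F hΨpos ?_ hΨ' ?_ ?_
    · simp only [hFdef]; norm_num
    · intro t ht
      have h64 := hpos t ht
      have hd := (((pow_deriv (1 - q) t h64).sub_const ((6:ℝ) ^ (1 - q))).const_mul
        (π / (q - 1))).const_add ((6:ℝ) ^ (-q) * Ψ 0)
      convert hd using 1
      · rfl
      · rfl
      rw [show 1 - q - 1 = -q by ring]
      field_simp
      ring
    · -- F tends to a negative limit
      set L : ℝ := (6:ℝ) ^ (-q) * Ψ 0 + (π / (q - 1)) * (0 - (6:ℝ) ^ (1 - q)) with hLdef
      have h1 : Tendsto (fun t : ℝ => (6 + 4 * t) ^ (1 - q)) atTop (nhds 0) := by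
        have := (tendsto_rpow_neg_atTop hq1').comp base_tendsto
        simpa [Function.comp_def, show -(q-1) = 1 - q by ring] using this
      have h2 : Tendsto F atTop (nhds L) := by
        rw [hLdef]
        exact ((h1.sub_const _).const_mul _).const_add _
      have hL : L < 0 := by
        have h6q : (0:ℝ) < (6:ℝ) ^ (-q) := rpow_pos_of_pos (by norm_num) _
        have h61q : (6:ℝ) ^ (1 - q) = 6 * (6:ℝ) ^ (-q) := by
          rw [show 1 - q = 1 + (-q) by ring, rpow_add (by norm_num : (0:ℝ) < 6), rpow_one]
        have hc : 4 * δ * (q - 1) < 6 := by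
          have h4 : 4 * q - 4 < 6 / δ := by rw [hq]; linarith
          nlinarith [(lt_div_iff₀ hδ).mp h4]
        rw [hLdef, hΨ0, h61q, div_mul_eq_mul_div]
        have key2 : (6:ℝ) ^ (-q) * (4 * π * δ) * (q - 1) < π * (6 * (6:ℝ) ^ (-q)) := by
          nlinarith [mul_pos h6q pi_pos]
        have h3 := (lt_div_iff₀ hq1').mpr key2
        have e : π * (0 - 6 * (6:ℝ) ^ (-q)) / (q - 1) = -(π * (6 * (6:ℝ) ^ (-q)) / (q - 1)) := by
          ring
        rw [e]
        linarith
      have hev : ∀ᶠ t in atTop, F t < 0 := by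
        filter_upwards [h2.eventually (eventually_lt_nhds hL)] with t ht using ht
      obtain ⟨T, hT1, hT2⟩ := (hev.and (eventually_ge_atTop 0)).exists
      exact ⟨T, hT2, hT1⟩
end

section
/- For α > 0, the function ρ(r) = (ρ₀/(2^{1/α}r₀))·r·(1 + r₀^α/(2r^α))^{2/α} on (0,∞) attains its minimum value ρ₀ at r = r₀/2^{1/α}, and ρ'(r) > 0 for r > r₀/2^{1/α}. -/
open Real

/-- The areal radius `ρ(r) = (ρ₀/(2^{1/α}r₀)) r (1 + r₀^α/(2r^α))^{2/α}` attains
its minimum value `ρ₀` at `r = r₀/2^{1/α}` and is strictly increasing beyond. -/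
theorem stmt12 (α ρ₀ r₀ : ℝ) (hα : 0 < α) (hρ₀ : 0 < ρ₀) (hr₀ : 0 < r₀)
    (ρ : ℝ → ℝ)
    (hρ : ∀ r, ρ r = (ρ₀ / ((2:ℝ) ^ (1/α) * r₀)) * r * (1 + r₀ ^ α / (2 * r ^ α)) ^ (2/α)) :
    ρ (r₀ / (2:ℝ) ^ (1/α)) = ρ₀ ∧
    (∀ r > (0:ℝ), ρ₀ ≤ ρ r) ∧
    (∀ r > r₀ / (2:ℝ) ^ (1/α), 0 < deriv ρ r) := by
  have hαne : α ≠ 0 := hα.ne'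
  have h2p : (0:ℝ) < (2:ℝ) ^ (1/α) := Real.rpow_pos_of_pos two_pos _
  set c : ℝ := ρ₀ / ((2:ℝ) ^ (1/α) * r₀) with hc
  have hcpos : 0 < c := div_pos hρ₀ (mul_pos h2p hr₀)
  set a : ℝ := r₀ ^ α with ha
  have hapos : 0 < a := Real.rpow_pos_of_pos hr₀ α
  have hrmpos : 0 < r₀ / (2:ℝ) ^ (1/α) := div_pos hr₀ h2p
  have h22 : (2:ℝ) ^ (1/α) * (2:ℝ) ^ (1/α) = (2:ℝ) ^ (2/α) := by
    rw [← Real.rpow_add two_pos]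
    norm_num
    ring_nf
  have hrma : (r₀ / (2:ℝ) ^ (1/α)) ^ α = a / 2 := by
    rw [Real.div_rpow hr₀.le h2p.le, ← Real.rpow_mul (by norm_num : (0:ℝ) ≤ 2),
      one_div_mul_cancel hαne, Real.rpow_one, ha]
  -- value at the minimum point
  have hval : ρ (r₀ / (2:ℝ) ^ (1/α)) = ρ₀ := by
    rw [hρ, hrma]
    have : a / (2 * (a / 2)) = 1 := by field_simp
    rw [this]
    norm_num
    have h2 : ((2:ℝ)) ^ (2/α) = (2:ℝ) ^ (1/α) * (2:ℝ) ^ (1/α) := h22.symm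
    rw [h2, hc]
    field_simp
  refine ⟨hval, ?_, ?_⟩
  · -- minimum
    intro r hr
    have hupos : 0 < r ^ α := Real.rpow_pos_of_pos hr α
    set u : ℝ := r ^ α with hu
    have hb : (0:ℝ) < 1 + a / (2 * u) := by positivity
    have key : 2 * a ≤ u * (1 + a / (2 * u)) ^ (2:ℕ) := by
      have h : u * (1 + a / (2 * u)) ^ (2:ℕ) = (u + a / 2) ^ (2:ℕ) / u := by
        field_simp
      rw [h, le_div_iff₀ hupos]
      nlinarith [sq_nonneg (u - a / 2)]
    -- rewrite ρ r as c * (u * (1+b)^2)^(1/α)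
    have hrw : r * (1 + a / (2 * u)) ^ ((2:ℝ)/α) = (u * (1 + a / (2 * u)) ^ (2:ℕ)) ^ ((1:ℝ)/α) := by
      rw [Real.mul_rpow hupos.le (by positivity)]
      congr 1
      · rw [hu, ← Real.rpow_mul hr.le, mul_one_div, div_self hαne, Real.rpow_one]
      · rw [← Real.rpow_natCast (1 + a / (2 * u)) 2, ← Real.rpow_mul hb.le]
        congr 1
        push_cast
        ring
    have hmono : ((2:ℝ) * a) ^ ((1:ℝ)/α) ≤ (u * (1 + a / (2 * u)) ^ (2:ℕ)) ^ ((1:ℝ)/α) :=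
      Real.rpow_le_rpow (by positivity) key (by positivity)
    have h2a : ((2:ℝ) * a) ^ ((1:ℝ)/α) = (2:ℝ) ^ (1/α) * r₀ := by
      rw [Real.mul_rpow (by norm_num) hapos.le, ha, ← Real.rpow_mul hr₀.le,
        mul_one_div, div_self hαne, Real.rpow_one]
    have hρ₀eq : ρ₀ = c * ((2:ℝ) ^ (1/α) * r₀) := by
      rw [hc]
      field_simp
    rw [hρ r, mul_assoc, hrw]
    rw [hρ₀eq, ← h2a]
    exact mul_le_mul_of_nonneg_left hmono hcpos.le
  · -- derivative
    intro r hr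
    have hr0 : 0 < r := lt_trans hrmpos hr
    set F : ℝ → ℝ := fun x => 1 + a / 2 * x ^ (-α) with hF
    have hFr : 0 < F r := by
      have : (0:ℝ) < r ^ (-α) := Real.rpow_pos_of_pos hr0 _
      rw [hF]
      positivity
    set φ : ℝ → ℝ := fun x => c * (x * F x ^ ((2:ℝ)/α)) with hφ
    have heq : ρ =ᶠ[nhds r] φ := by
      filter_upwards [eventually_gt_nhds hr0] with x hx
      rw [hρ x, hφ, hF]
      simp only []
      rw [Real.rpow_neg hx.le]
      ring
    have hd1 : HasDerivAt (fun x : ℝ => x ^ (-α)) (-α * r ^ (-α - 1)) r :=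
      Real.hasDerivAt_rpow_const (Or.inl hr0.ne')
    have hdF : HasDerivAt F (a / 2 * (-α * r ^ (-α - 1))) r := by
      exact ((hd1.const_mul (a / 2)).const_add 1)
    have hdG : HasDerivAt (fun x => F x ^ ((2:ℝ)/α))
        (a / 2 * (-α * r ^ (-α - 1)) * (2/α) * F r ^ ((2:ℝ)/α - 1)) r :=
      hdF.rpow_const (Or.inl hFr.ne')
    have hdφ : HasDerivAt φ
        (c * (1 * F r ^ ((2:ℝ)/α) + r * (a / 2 * (-α * r ^ (-α - 1)) * (2/α) * F r ^ ((2:ℝ)/α - 1)))) r := by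
      exact ((hasDerivAt_id r).mul hdG).const_mul c
    have hderiv : deriv ρ r =
        c * (1 * F r ^ ((2:ℝ)/α) + r * (a / 2 * (-α * r ^ (-α - 1)) * (2/α) * F r ^ ((2:ℝ)/α - 1))) := by
      rw [heq.deriv_eq, hdφ.deriv]
    rw [hderiv]
    -- simplify
    have hw : r ^ (-α - 1) = r ^ (-α) / r := by
      rw [Real.rpow_sub hr0, Real.rpow_one]
    have hsplit : F r ^ ((2:ℝ)/α) = F r ^ ((2:ℝ)/α - 1) * F r := by
      have h : (2:ℝ)/α = ((2:ℝ)/α - 1) + 1 := by ring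
      nth_rewrite 1 [h]
      rw [Real.rpow_add hFr, Real.rpow_one]
    rw [hw, hsplit]
    have hFval : F r = 1 + a / 2 * r ^ (-α) := rfl
    have hkey : c * (1 * (F r ^ ((2:ℝ)/α - 1) * F r) +
        r * (a / 2 * (-α * (r ^ (-α) / r)) * (2/α) * F r ^ ((2:ℝ)/α - 1))) =
        c * F r ^ ((2:ℝ)/α - 1) * (1 - a / 2 * r ^ (-α)) := by
      rw [hFval]
      field_simp
      ring
    rw [hkey]
    have hlt : a / 2 * r ^ (-α) < 1 := by
      have hmono : (r₀ / (2:ℝ) ^ (1/α)) ^ α < r ^ α :=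
        Real.rpow_lt_rpow hrmpos.le hr hα
      rw [hrma] at hmono
      rw [Real.rpow_neg hr0.le]
      rw [mul_inv_lt_iff₀ (Real.rpow_pos_of_pos hr0 α)]
      linarith
    have hP : 0 < F r ^ ((2:ℝ)/α - 1) := Real.rpow_pos_of_pos hFr _
    have : 0 < 1 - a / 2 * r ^ (-α) := by linarith
    positivity
end
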